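/- arXiv:1103.2584 — 3 statements merged into one kernel-verified Lean document; each statement's English description precedes it below -/
import Mathlib

section
/- Let p > 1, a > 0, q > 0 satisfy (p−1)a = q−2, let B, K, R, T₀ be positive constants with T₀ ≥ R, and fix δ with 0 < δ < (p−1)/2. Set K₀ = { (1/(2^{q/2} a)) · √(B/(p+1)) · (1 − 2^{−aδ}) }^{−2/(p−1)}. Suppose G : [0,T) → ℝ is twice continuously differentiable and satisfies: G(t) ≥ K t^a for all t with T₀ ≤ t < T; G''(t) ≥ B (t+R)^{−q} |G(t)|^p for all t with 0 ≤ t < T; and G(0) > 0, G'(0) > 0. If K ≥ K₀, then T ≤ 2 T₁, where T₁ = max{ T₀, G(0)/G'(0) }. -/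
lemma le_on_Icc_of_deriv_nonneg {f f' : ℝ → ℝ} {x y : ℝ} (hxy : x ≤ y)
    (hf : ∀ t ∈ Set.Icc x y, HasDerivWithinAt f (f' t) (Set.Icc x y) t)
    (h0 : ∀ t ∈ Set.Ioo x y, 0 ≤ f' t) : f x ≤ f y := by
  have hmono : MonotoneOn f (Set.Icc x y) := by
    apply monotoneOn_of_hasDerivWithinAt_nonneg (f' := f') (convex_Icc x y)
      (fun t ht => (hf t ht).continuousWithinAt)
    · intro t ht
      rw [interior_Icc] at ht ⊢
      exact (hf t (Set.Ioo_subset_Icc_self ht)).mono Set.Ioo_subset_Icc_self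
    · intro t ht
      rw [interior_Icc] at ht
      exact h0 t ht
  exact hmono (Set.left_mem_Icc.2 hxy) (Set.right_mem_Icc.2 hxy) hxy

set_option maxHeartbeats 2000000 in
/-- **Blow-up for an ordinary differential inequality with the critical balance
`(p-1)a = q-2`** (Lemma 2.1).
If `G` is `C²` on `[0,T)`, satisfies `G(t) ≥ K t^a` for `T₀ ≤ t < T`,
`G''(t) ≥ B (t+R)^{-q} |G(t)|^p` for `0 ≤ t < T`, `G(0) > 0`, `G'(0) > 0`,
and `K ≥ K₀`, then `T ≤ 2 max{T₀, G(0)/G'(0)}`. -/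
theorem ODI_blowup_critical_balance
    (p a q B K R T₀ δ T : ℝ)
    (G G' G'' : ℝ → ℝ)
    (hp : 1 < p) (ha : 0 < a) (hq : 0 < q)
    (hbal : (p - 1) * a = q - 2)
    (hB : 0 < B) (hK : 0 < K) (hR : 0 < R) (hT₀ : 0 < T₀) (hRT₀ : R ≤ T₀)
    (hδ : 0 < δ) (hδ' : δ < (p - 1) / 2)
    (hG' : ∀ t ∈ Set.Ico (0 : ℝ) T, HasDerivWithinAt G (G' t) (Set.Ico 0 T) t)
    (hG'' : ∀ t ∈ Set.Ico (0 : ℝ) T, HasDerivWithinAt G' (G'' t) (Set.Ico 0 T) t)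
    (hGcont : ContinuousOn G'' (Set.Ico 0 T))
    (hlow : ∀ t, T₀ ≤ t → t < T → K * t ^ a ≤ G t)
    (hODI : ∀ t, 0 ≤ t → t < T → B * (t + R) ^ (-q) * |G t| ^ p ≤ G'' t)
    (hG0 : 0 < G 0) (hG'0 : 0 < G' 0)
    (hK₀ : (1 / ((2 : ℝ) ^ (q / 2) * a) * Real.sqrt (B / (p + 1)) *
        (1 - (2 : ℝ) ^ (-(a * δ)))) ^ (-(2 / (p - 1))) ≤ K) :
    T ≤ 2 * max T₀ (G 0 / G' 0) := by
  by_contra hcon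
  push_neg at hcon
  set M := max T₀ (G 0 / G' 0) with hMdef
  have hMpos : 0 < M := lt_of_lt_of_le hT₀ (le_max_left _ _)
  have hTpos : 0 < T := by linarith
  set S := Set.Ico (0:ℝ) T with hSdef
  have h0S : (0:ℝ) ∈ S := ⟨le_refl 0, hTpos⟩
  have hIccS : ∀ {x y : ℝ}, 0 ≤ x → y < T → Set.Icc x y ⊆ S := by
    intro x y hx hy
    exact fun τ hτ => ⟨hx.trans hτ.1, lt_of_le_of_lt hτ.2 hy⟩
  -- G'' nonneg on S
  have hG''0 : ∀ t ∈ S, 0 ≤ G'' t := by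
    intro t ht
    refine le_trans ?_ (hODI t ht.1 ht.2)
    have : (0:ℝ) < t + R := by linarith [ht.1]
    positivity
  -- G' monotone on S, positive
  have hG'mono : MonotoneOn G' S := by
    apply monotoneOn_of_hasDerivWithinAt_nonneg (f' := G'') (convex_Ico 0 T)
      (fun t ht => (hG'' t ht).continuousWithinAt)
    · intro t ht
      rw [interior_Ico] at ht ⊢
      exact (hG'' t (Set.Ioo_subset_Ico_self ht)).mono Set.Ioo_subset_Ico_self
    · intro t ht
      rw [interior_Ico] at ht
      exact hG''0 t (Set.Ioo_subset_Ico_self ht)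
  have hG'pos : ∀ t ∈ S, 0 < G' t := fun t ht =>
    lt_of_lt_of_le hG'0 (hG'mono h0S ht ht.1)
  -- G monotone, positive
  have hGmono : MonotoneOn G S := by
    apply monotoneOn_of_hasDerivWithinAt_nonneg (f' := G') (convex_Ico 0 T)
      (fun t ht => (hG' t ht).continuousWithinAt)
    · intro t ht
      rw [interior_Ico] at ht ⊢
      exact (hG' t (Set.Ioo_subset_Ico_self ht)).mono Set.Ioo_subset_Ico_self
    · intro t ht
      rw [interior_Ico] at ht
      exact (hG'pos t (Set.Ioo_subset_Ico_self ht)).le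
  have hGpos : ∀ t ∈ S, 0 < G t := fun t ht =>
    lt_of_lt_of_le hG0 (hGmono h0S ht ht.1)
  -- linear lower bound
  have hlin : ∀ t ∈ S, G 0 + G' 0 * t ≤ G t := by
    intro t ht
    have key : G 0 - G' 0 * 0 ≤ G t - G' 0 * t := by
      apply le_on_Icc_of_deriv_nonneg (f := fun τ => G τ - G' 0 * τ)
        (f' := fun τ => G' τ - G' 0 * 1) ht.1
      · intro τ hτ
        have hτS : τ ∈ S := hIccS (le_refl 0) ht.2 hτ
        exact ((hG' τ hτS).mono (hIccS (le_refl 0) ht.2)).sub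
          (((hasDerivAt_id τ).const_mul (G' 0)).hasDerivWithinAt)
      · intro τ hτ
        have hτS : τ ∈ S := hIccS (le_refl 0) ht.2 (Set.Ioo_subset_Icc_self hτ)
        have := hG'mono h0S hτS hτS.1
        simp only [mul_one]
        linarith
    simp only [mul_zero, sub_zero, mul_one] at key
    linarith
  -- doubling
  have hdouble : ∀ t ∈ S, M ≤ t → 2 * G 0 ≤ G t := by
    intro t ht hMt
    have h1 : G 0 / G' 0 ≤ t := le_trans (le_max_right _ _) hMt
    have h2 : G 0 ≤ G' 0 * t := by
      rw [div_le_iff₀ hG'0] at h1; linarith [h1]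
    linarith [hlin t ht]
  -- ENERGY
  have hEnergy : ∀ t ∈ S, T₀ ≤ t →
      2 * B * (2*t) ^ (-q) / (p+1) * (G t ^ (p+1) - G 0 ^ (p+1)) ≤ G' t * G' t := by
    intro t ht hT₀t
    have htpos : 0 < t := lt_of_lt_of_le hT₀ hT₀t
    set c := 2 * B * (2*t) ^ (-q) / (p+1) with hcdef
    have hcpos : 0 < c := by
      have : (0:ℝ) < (2*t) ^ (-q) := Real.rpow_pos_of_pos (by positivity) _
      positivity
    have hsub : Set.Icc (0:ℝ) t ⊆ S := hIccS (le_refl 0) ht.2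
    have key : G' 0 * G' 0 - c * G 0 ^ (p+1) ≤ G' t * G' t - c * G t ^ (p+1) := by
      apply le_on_Icc_of_deriv_nonneg
        (f := fun τ => G' τ * G' τ - c * G τ ^ (p+1))
        (f' := fun τ => (G'' τ * G' τ + G' τ * G'' τ) - c * (G' τ * (p+1) * G τ ^ (p+1-1)))
        htpos.le
      · intro τ hτ
        have hτS : τ ∈ S := hsub hτ
        exact (((hG'' τ hτS).mono hsub).mul ((hG'' τ hτS).mono hsub)).sub
          ((((hG' τ hτS).mono hsub).rpow_const (Or.inl (hGpos τ hτS).ne')).const_mul c)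
      · intro τ hτ
        have hτS : τ ∈ S := hsub (Set.Ioo_subset_Icc_self hτ)
        have hGτ : 0 < G τ := hGpos τ hτS
        have hG'τ : 0 < G' τ := hG'pos τ hτS
        have h2t : 0 < τ + R := by linarith [hτ.1]
        have hle : τ + R ≤ 2 * t := by
          have h1 := hτ.2.le
          linarith
        have hrpow : (2*t) ^ (-q) ≤ (τ+R) ^ (-q) :=
          Real.rpow_le_rpow_of_nonpos h2t hle (neg_nonpos.2 hq.le)
        have hODIτ : B * (τ+R) ^ (-q) * G τ ^ p ≤ G'' τ := by
          have h := hODI τ hτS.1 hτS.2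
          rwa [abs_of_pos hGτ] at h
        have hGp : (0:ℝ) ≤ G τ ^ p := Real.rpow_nonneg hGτ.le p
        have hstep : B * (2*t) ^ (-q) * G τ ^ p ≤ G'' τ := by
          have hh := mul_le_mul_of_nonneg_right (mul_le_mul_of_nonneg_left hrpow hB.le) hGp
          linarith
        have hexp : p + 1 - 1 = p := by ring
        rw [hexp]
        have hcp : c * (p+1) = 2 * (B * (2*t)^(-q)) := by
          rw [hcdef]; field_simp
        have hfin : c * (G' τ * (p+1) * G τ ^ p) ≤ 2 * G'' τ * G' τ := by
          have h1 : c * (G' τ * (p+1) * G τ ^ p) = (c * (p+1)) * (G τ ^ p * G' τ) := by ring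
          rw [h1, hcp]
          nlinarith [mul_le_mul_of_nonneg_right hstep hG'τ.le]
        nlinarith
    nlinarith [mul_pos hG'0 hG'0]
  -- FIRST ORDER ODE
  set m := Real.sqrt (B / (p+1)) with hmdef
  have hmpos : 0 < m := Real.sqrt_pos.2 (by positivity)
  have hODE : ∀ t ∈ S, M ≤ t → m * (2*t) ^ (-(q/2)) * G t ^ ((p+1)/2) ≤ G' t := by
    intro t ht hMt
    have htpos : 0 < t := lt_of_lt_of_le hMpos hMt
    have hT₀t : T₀ ≤ t := le_trans (le_max_left _ _) hMt
    have hGt : 0 < G t := hGpos t ht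
    have hG't : 0 < G' t := hG'pos t ht
    have h2tpos : (0:ℝ) < 2*t := by linarith
    set L := m * (2*t) ^ (-(q/2)) * G t ^ ((p+1)/2) with hLdef
    have hLnn : 0 ≤ L := by positivity
    have hsq : L * L ≤ G' t * G' t := by
      have h1 : m * m = B/(p+1) := Real.mul_self_sqrt (by positivity)
      have h2 : (2*t) ^ (-(q/2)) * (2*t) ^ (-(q/2)) = (2*t) ^ (-q) := by
        rw [← Real.rpow_add h2tpos]; congr 1; ring
      have h3 : G t ^ ((p+1)/2) * G t ^ ((p+1)/2) = G t ^ (p+1) := by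
        rw [← Real.rpow_add hGt]; congr 1; ring
      have hLL : L * L = B/(p+1) * ((2*t) ^ (-q) * G t ^ (p+1)) := by
        calc L * L
            = (m*m) * (((2*t)^(-(q/2)) * (2*t)^(-(q/2))) * (G t ^((p+1)/2) * G t ^((p+1)/2))) := by
              rw [hLdef]; ring
          _ = B/(p+1) * ((2*t) ^ (-q) * G t ^ (p+1)) := by rw [h1, h2, h3]
      rw [hLL]
      have hhalf : G 0 ^ (p+1) ≤ G t ^ (p+1) / 2 := by
        have hd : 2 * G 0 ≤ G t := hdouble t ht hMt
        have ha1 : G 0 ^ (p+1) ≤ (G t / 2) ^ (p+1) :=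
          Real.rpow_le_rpow hG0.le (by linarith) (by linarith)
        have ha2 : (G t / 2) ^ (p+1) = G t ^ (p+1) / 2 ^ (p+1) :=
          Real.div_rpow hGt.le (by norm_num) _
        have ha3 : (2:ℝ) ≤ 2 ^ (p+1) := by
          nth_rewrite 1 [← Real.rpow_one 2]
          exact Real.rpow_le_rpow_of_exponent_le one_le_two (by linarith)
        have ha4 : G t ^ (p+1) / 2 ^ (p+1) ≤ G t ^ (p+1) / 2 := by
          gcongr

        linarith
      have hE := hEnergy t ht hT₀t
      have hq1 : (0:ℝ) < p + 1 := by linarith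
      have hBD : (0:ℝ) ≤ 2 * B * (2*t) ^ (-q) := by
        have : (0:ℝ) ≤ (2*t) ^ (-q) := Real.rpow_nonneg h2tpos.le _
        positivity
      have hE' : 2 * B * (2*t) ^ (-q) * (G t ^ (p+1) - G 0 ^ (p+1)) ≤ G' t * G' t * (p+1) := by
        rwa [div_mul_eq_mul_div, div_le_iff₀ hq1] at hE
      rw [div_mul_eq_mul_div, div_le_iff₀ hq1]
      nlinarith [mul_le_mul_of_nonneg_left hhalf hBD]
    calc L = Real.sqrt (L * L) := (Real.sqrt_mul_self hLnn).symm
      _ ≤ Real.sqrt (G' t * G' t) := Real.sqrt_le_sqrt hsq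
      _ = G' t := Real.sqrt_mul_self hG't.le
  -- FINAL
  set β := a * (p-1) / 2 with hβdef
  have hp1 : 0 < p - 1 := by linarith
  have hβpos : 0 < β := by rw [hβdef]; positivity
  have hβq : β + 1 = q / 2 := by rw [hβdef]; linarith
  set γ := -((p-1)/2) with hγdef
  have hγneg : γ < 0 := by rw [hγdef]; linarith
  have hMS : M ∈ S := ⟨hMpos.le, by linarith⟩
  have h2MS : (2*M) ∈ S := ⟨by linarith, hcon⟩
  have hsub2 : Set.Icc M (2*M) ⊆ S := fun τ hτ =>
    ⟨le_trans hMpos.le hτ.1, lt_of_le_of_lt hτ.2 hcon⟩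
  have hZ : (m/(2*a)) * (2*M) ^ (-β) - G M ^ γ ≤
      (m/(2*a)) * (2*(2*M)) ^ (-β) - G (2*M) ^ γ := by
    apply le_on_Icc_of_deriv_nonneg
      (f := fun τ => (m/(2*a)) * (2*τ) ^ (-β) - G τ ^ γ)
      (f' := fun τ => (m/(2*a)) * (2 * 1 * (-β) * (2*τ) ^ (-β-1)) - G' τ * γ * G τ ^ (γ-1))
      (by linarith)
    · intro τ hτ
      have hτpos : 0 < τ := lt_of_lt_of_le hMpos hτ.1
      have hτS : τ ∈ S := hsub2 hτ
      refine HasDerivWithinAt.sub ?_ ?_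
      · exact ((((hasDerivAt_id τ).const_mul 2).rpow_const
          (Or.inl (by positivity))).hasDerivWithinAt).const_mul _
      · exact ((hG' τ hτS).mono hsub2).rpow_const (Or.inl (hGpos τ hτS).ne')
    · intro τ hτ
      have hτS : τ ∈ S := hsub2 (Set.Ioo_subset_Icc_self hτ)
      have hτpos : 0 < τ := lt_of_lt_of_le hMpos hτ.1.le
      have hGτ : 0 < G τ := hGpos τ hτS
      have hG'τ : 0 < G' τ := hG'pos τ hτS
      have hup := hODE τ hτS hτ.1.le
      have hexp : -β - 1 = -(q/2) := by linarith
      rw [hexp]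
      have hP : (0:ℝ) < G τ ^ (γ-1) := Real.rpow_pos_of_pos hGτ _
      have hA : (0:ℝ) < (2*τ) ^ (-(q/2)) := Real.rpow_pos_of_pos (by positivity) _
      have hPQ : G τ ^ ((p+1)/2) * G τ ^ (γ-1) = 1 := by
        rw [← Real.rpow_add hGτ, hγdef]
        have he : (p+1)/2 + (-((p-1)/2) - 1) = 0 := by ring
        rw [he, Real.rpow_zero]
      have h2 : m * (2*τ)^(-(q/2)) ≤ G' τ * G τ ^ (γ-1) := by
        have h1 := mul_le_mul_of_nonneg_right hup hP.le
        calc m * (2*τ)^(-(q/2))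
            = m * (2*τ)^(-(q/2)) * (G τ ^ ((p+1)/2) * G τ ^ (γ-1)) := by rw [hPQ]; ring
          _ = m * (2*τ)^(-(q/2)) * G τ ^ ((p+1)/2) * G τ ^ (γ-1) := by ring
          _ ≤ G' τ * G τ ^ (γ-1) := h1
      have hcoef : (m/(2*a)) * (2 * 1 * (-β) * ((2*τ)^(-(q/2)))) =
          -((p-1)/2 * (m * (2*τ)^(-(q/2)))) := by
        rw [hβdef]; field_simp
      rw [hcoef, hγdef]
      nlinarith [mul_le_mul_of_nonneg_left h2 (show (0:ℝ) ≤ (p-1)/2 by linarith)]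
  -- bound u M
  have hMβ : (0:ℝ) < M ^ (-β) := Real.rpow_pos_of_pos hMpos _
  have huM : G M ^ γ ≤ K ^ γ * M ^ (-β) := by
    have hlowM : K * M ^ a ≤ G M := hlow M (le_max_left _ _) (by linarith)
    have hMa : (0:ℝ) < M ^ a := Real.rpow_pos_of_pos hMpos _
    have hKMa : 0 < K * M ^ a := by positivity
    have h1 : G M ^ γ ≤ (K * M ^ a) ^ γ :=
      Real.rpow_le_rpow_of_nonpos hKMa hlowM hγneg.le
    have h2 : (K * M ^ a) ^ γ = K ^ γ * M ^ (-β) := by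
      rw [Real.mul_rpow hK.le hMa.le, ← Real.rpow_mul hMpos.le]
      congr 2
      rw [hβdef, hγdef]; ring
    linarith [h1, h2.le, h2.ge]
  -- bound K^γ by X
  set X := 1 / ((2:ℝ) ^ (q / 2) * a) * m * (1 - (2:ℝ) ^ (-(a * δ))) with hXdef
  have h2aδ : (2:ℝ) ^ (-(a*δ)) < 1 :=
    Real.rpow_lt_one_of_one_lt_of_neg one_lt_two (by nlinarith)
  have h2q2 : (0:ℝ) < 2 ^ (q/2) := Real.rpow_pos_of_pos two_pos _
  have hXpos : 0 < X := by
    rw [hXdef]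
    have h1 : (0:ℝ) < 1 - (2:ℝ)^(-(a*δ)) := by linarith
    positivity
  have hKγX : K ^ γ ≤ X := by
    have h0 : (0:ℝ) < X ^ (-(2/(p-1))) := Real.rpow_pos_of_pos hXpos _
    have h1 : K ^ γ ≤ (X ^ (-(2/(p-1)))) ^ γ :=
      Real.rpow_le_rpow_of_nonpos h0 hK₀ hγneg.le
    have h2 : (X ^ (-(2/(p-1)))) ^ γ = X := by
      rw [← Real.rpow_mul hXpos.le]
      have he : -(2/(p-1)) * γ = 1 := by rw [hγdef]; field_simp
      rw [he, Real.rpow_one]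
    linarith [h2.le]
  -- assemble
  have hu2M : 0 ≤ G (2*M) ^ γ := Real.rpow_nonneg (hGpos _ h2MS).le _
  have hXν : K ^ γ * M ^ (-β) ≤ X * M ^ (-β) := mul_le_mul_of_nonneg_right hKγX hMβ.le
  have e1 : (2*M) ^ (-β) = 2 ^ (-β) * M ^ (-β) := Real.mul_rpow (by norm_num) hMpos.le
  have e2 : (2*(2*M)) ^ (-β) = 2 ^ (-β) * (2 ^ (-β) * M ^ (-β)) := by
    rw [Real.mul_rpow (by norm_num) (by positivity), e1]
  have hstep : (m/(2*a)) * (2^(-β) * M^(-β)) - (m/(2*a)) * (2^(-β) * (2^(-β) * M^(-β)))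
      ≤ X * M^(-β) := by
    rw [← e2, ← e1]
    linarith [hZ, huM, hXν]
  have hwpos : (0:ℝ) < (2:ℝ)^β := Real.rpow_pos_of_pos two_pos _
  have e3 : (2:ℝ) ^ (q/2) = 2 * (2:ℝ) ^ β := by
    rw [← hβq, Real.rpow_add two_pos, Real.rpow_one]; ring
  have e5 : (2:ℝ) ^ (-β) = ((2:ℝ) ^ β)⁻¹ := Real.rpow_neg (by norm_num) β
  have hXeq : X = m / (2*a) * (2:ℝ)^(-β) * (1 - (2:ℝ)^(-(a*δ))) := by
    rw [hXdef, e3, e5]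
    ring
  have hcancel : 0 < m / (2*a) * (2:ℝ)^(-β) * M^(-β) := by
    have : (0:ℝ) < (2:ℝ)^(-β) := Real.rpow_pos_of_pos two_pos _
    positivity
  have hyx : (2:ℝ)^(-(a*δ)) ≤ (2:ℝ)^(-β) := by
    rw [hXeq] at hstep
    nlinarith [hcancel]
  have hfinal : -(a*δ) ≤ -β := (Real.rpow_le_rpow_left_iff one_lt_two).1 hyx
  rw [hβdef] at hfinal
  nlinarith [mul_lt_mul_of_pos_left hδ' ha]
end

section
/- Let p > 1 and let B, R, q be positive constants. Suppose G : [0,T) → ℝ is twice continuously differentiable and satisfies G''(t) ≥ B (t+R)^{−q} |G(t)|^p for all 0 ≤ t < T, together with G(0) > 0 and G'(0) > 0. Then for every t with G(0)/G'(0) ≤ t < T one has G'(t) > √(B/(p+1)) · G(t)^{(p+1)/2} / (t+R)^{q/2}. (In particular G'(t) ≥ G'(0) > 0 and G(t) ≥ G'(0) t + G(0) > 0 for all 0 ≤ t < T.) -/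
/-- Monotonicity helper on a closed interval from `HasDerivWithinAt` with nonneg derivative. -/
lemma odi_mono_aux {a b : ℝ} {f f' : ℝ → ℝ}
    (hf : ∀ t ∈ Set.Icc a b, HasDerivWithinAt f (f' t) (Set.Icc a b) t)
    (h0 : ∀ t ∈ Set.Icc a b, 0 ≤ f' t) : MonotoneOn f (Set.Icc a b) := by
  apply monotoneOn_of_hasDerivWithinAt_nonneg (f' := f') (convex_Icc a b)
    (fun t ht => (hf t ht).continuousWithinAt)
  · intro x hx
    rw [interior_Icc] at hx ⊢
    exact (hf x (Set.Ioo_subset_Icc_self hx)).mono Set.Ioo_subset_Icc_self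
  · intro x hx
    rw [interior_Icc] at hx
    exact h0 x (Set.Ioo_subset_Icc_self hx)

/-- First-stage differential inequality in the proof of the ODI blow-up lemma:
if `G` is `C²` on `[0,T)` with `G''(t) ≥ B (t+R)^{-q} |G(t)|^p`, `G(0) > 0` and
`G'(0) > 0`, then `G'(t) ≥ G'(0)` and `G(t) ≥ G'(0) t + G(0)` on `[0,T)`, and
`G'(t) > √(B/(p+1)) · G(t)^{(p+1)/2} / (t+R)^{q/2}` for `G(0)/G'(0) ≤ t < T`. -/
theorem ODI_first_stage
    (p B R q T : ℝ)
    (G G' G'' : ℝ → ℝ)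
    (hp : 1 < p) (hB : 0 < B) (hR : 0 < R) (hq : 0 < q)
    (hG' : ∀ t ∈ Set.Ico (0 : ℝ) T, HasDerivWithinAt G (G' t) (Set.Ico 0 T) t)
    (hG'' : ∀ t ∈ Set.Ico (0 : ℝ) T, HasDerivWithinAt G' (G'' t) (Set.Ico 0 T) t)
    (hGcont : ContinuousOn G'' (Set.Ico 0 T))
    (hODI : ∀ t, 0 ≤ t → t < T → B * (t + R) ^ (-q) * |G t| ^ p ≤ G'' t)
    (hG0 : 0 < G 0) (hG'0 : 0 < G' 0) :
    (∀ t, 0 ≤ t → t < T → G' 0 ≤ G' t ∧ G' 0 * t + G 0 ≤ G t) ∧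
      (∀ t, G 0 / G' 0 ≤ t → t < T →
        Real.sqrt (B / (p + 1)) * G t ^ ((p + 1) / 2) / (t + R) ^ (q / 2) < G' t) := by
  have hG''nonneg : ∀ t, 0 ≤ t → t < T → 0 ≤ G'' t := by
    intro t h1 h2
    refine le_trans ?_ (hODI t h1 h2)
    have h3 : (0:ℝ) ≤ t + R := by linarith
    exact mul_nonneg (mul_nonneg hB.le (Real.rpow_nonneg h3 _))
      (Real.rpow_nonneg (abs_nonneg _) _)
  -- G' is ≥ G' 0 on [0,T)
  have hG'mono : ∀ t, 0 ≤ t → t < T → G' 0 ≤ G' t := by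
    intro t h1 h2
    have hsub : Set.Icc 0 t ⊆ Set.Ico 0 T := fun s hs => ⟨hs.1, lt_of_le_of_lt hs.2 h2⟩
    have := odi_mono_aux (f := G') (f' := G'')
      (fun s hs => (hG'' s (hsub hs)).mono hsub)
      (fun s hs => hG''nonneg s hs.1 (lt_of_le_of_lt hs.2 h2))
    exact this ⟨le_refl 0, h1⟩ ⟨h1, le_refl t⟩ h1
  have hGlin : ∀ t, 0 ≤ t → t < T → G' 0 * t + G 0 ≤ G t := by
    intro t h1 h2
    have hsub : Set.Icc 0 t ⊆ Set.Ico 0 T := fun s hs => ⟨hs.1, lt_of_le_of_lt hs.2 h2⟩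
    have hder : ∀ s ∈ Set.Icc 0 t,
        HasDerivWithinAt (fun s => G s - G' 0 * s) (G' s - G' 0) (Set.Icc 0 t) s := by
      intro s hs
      have := ((hG' s (hsub hs)).mono hsub).sub
        (((hasDerivWithinAt_id s (Set.Icc 0 t)).const_mul (G' 0)))
      exact this.congr_deriv (by simp)
    have := odi_mono_aux hder
      (fun s hs => by
        have := hG'mono s hs.1 (lt_of_le_of_lt hs.2 h2); linarith)
      ⟨le_refl 0, h1⟩ ⟨h1, le_refl t⟩ h1
    simp only [mul_zero, sub_zero] at this
    linarith
  have part1 : ∀ t, 0 ≤ t → t < T → G' 0 ≤ G' t ∧ G' 0 * t + G 0 ≤ G t :=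
    fun t h1 h2 => ⟨hG'mono t h1 h2, hGlin t h1 h2⟩
  refine ⟨part1, ?_⟩
  have hGpos : ∀ t, 0 ≤ t → t < T → 0 < G t := by
    intro t h1 h2
    have := hGlin t h1 h2
    nlinarith
  intro t ht0 htT
  have ht0' : 0 ≤ t := le_trans (le_of_lt (div_pos hG0 hG'0)) ht0
  have htR : 0 < t + R := by linarith
  have hGt : 0 < G t := hGpos t ht0' htT
  have hG't : 0 < G' t := lt_of_lt_of_le hG'0 (hG'mono t ht0' htT)
  have h2G0 : 2 * G 0 ≤ G t := by
    have h1 : G 0 ≤ G' 0 * t := by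
      rw [div_le_iff₀ hG'0] at ht0; linarith [ht0]
    have := hGlin t ht0' htT
    linarith
  set C : ℝ := B * (t + R) ^ (-q) with hC
  have hCpos : 0 < C := mul_pos hB (Real.rpow_pos_of_pos htR _)
  have hp1 : (0:ℝ) < p + 1 := by linarith
  set D : ℝ := 2 * C / (p + 1) with hD
  have hDpos : 0 < D := by positivity
  have hsub : Set.Icc 0 t ⊆ Set.Ico 0 T := fun s hs => ⟨hs.1, lt_of_le_of_lt hs.2 htT⟩
  -- the energy function F s = G' s * G' s - D * (G s)^(p+1) is monotone on [0,t]
  have hkey : G' 0 * G' 0 - D * G 0 ^ (p + 1) ≤ G' t * G' t - D * G t ^ (p + 1) := by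
    have hder : ∀ s ∈ Set.Icc 0 t,
        HasDerivWithinAt (fun s => G' s * G' s - D * G s ^ (p + 1))
          ((G'' s * G' s + G' s * G'' s) - D * (G' s * (p + 1) * G s ^ (p + 1 - 1)))
          (Set.Icc 0 t) s := by
      intro s hs
      have h1 := ((hG'' s (hsub hs)).mono hsub).mul ((hG'' s (hsub hs)).mono hsub)
      have h2 : HasDerivWithinAt (fun s => G s ^ (p + 1))
          (G' s * (p + 1) * G s ^ (p + 1 - 1)) (Set.Icc 0 t) s :=
        ((hG' s (hsub hs)).mono hsub).rpow_const (Or.inl (ne_of_gt (hGpos s hs.1 (lt_of_le_of_lt hs.2 htT))))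
      exact h1.sub (h2.const_mul D)
    have hnonneg : ∀ s ∈ Set.Icc 0 t,
        0 ≤ (G'' s * G' s + G' s * G'' s) - D * (G' s * (p + 1) * G s ^ (p + 1 - 1)) := by
      intro s hs
      have hsT : s < T := lt_of_le_of_lt hs.2 htT
      have hGs : 0 < G s := hGpos s hs.1 hsT
      have hG's : 0 < G' s := lt_of_lt_of_le hG'0 (hG'mono s hs.1 hsT)
      have hsR : 0 < s + R := by linarith [hs.1]
      have habs : |G s| = G s := abs_of_pos hGs
      have hODIs := hODI s hs.1 hsT
      rw [habs] at hODIs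
      have hmono : (t + R) ^ (-q) ≤ (s + R) ^ (-q) :=
        Real.rpow_le_rpow_of_nonpos hsR (by linarith [hs.2]) (by linarith)
      have hGp : 0 ≤ G s ^ p := Real.rpow_nonneg hGs.le _
      have hC' : C * G s ^ p ≤ G'' s := by
        calc C * G s ^ p = B * (t + R) ^ (-q) * G s ^ p := by rw [hC]
          _ ≤ B * (s + R) ^ (-q) * G s ^ p :=
              mul_le_mul_of_nonneg_right (mul_le_mul_of_nonneg_left hmono hB.le) hGp
          _ ≤ G'' s := hODIs
      have hexp : p + 1 - 1 = p := by ring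
      rw [hexp]
      have hDC : D * (p + 1) = 2 * C := by
        rw [hD]; field_simp
      have h6 : D * (G' s * (p + 1) * G s ^ p) = 2 * (G' s * (C * G s ^ p)) := by
        rw [hD]; field_simp
      have h7 : G'' s * G' s = G' s * G'' s := mul_comm _ _
      linarith [h6, h7, mul_le_mul_of_nonneg_left hC' (le_of_lt hG's)]
    have := odi_mono_aux hder hnonneg ⟨le_refl 0, ht0'⟩ ⟨ht0', le_refl t⟩ ht0'
    simpa using this
  -- G 0 ^ (p+1) ≤ G t ^ (p+1) / 2
  have hpow : 2 * G 0 ^ (p + 1) ≤ G t ^ (p + 1) := by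
    have h1 : (2 * G 0) ^ (p + 1) ≤ G t ^ (p + 1) :=
      Real.rpow_le_rpow (by linarith) h2G0 (by linarith)
    have h2 : (2 * G 0) ^ (p + 1) = 2 ^ (p + 1) * G 0 ^ (p + 1) :=
      Real.mul_rpow (by norm_num) hG0.le
    have h3 : (2:ℝ) ≤ 2 ^ (p + 1) := by
      calc (2:ℝ) = 2 ^ (1:ℝ) := (Real.rpow_one 2).symm
        _ ≤ 2 ^ (p + 1) := Real.rpow_le_rpow_of_exponent_le one_le_two (by linarith)
    nlinarith [Real.rpow_nonneg hG0.le (p + 1)]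
  -- G' t * G' t > (D/2) * G t ^ (p+1)
  have hmain : D / 2 * G t ^ (p + 1) < G' t * G' t := by
    nlinarith [Real.rpow_nonneg hGt.le (p + 1)]
  -- identify (D/2) * G t ^ (p+1) with the square of the RHS
  set RHS : ℝ := Real.sqrt (B / (p + 1)) * G t ^ ((p + 1) / 2) / (t + R) ^ (q / 2) with hRHS
  have hRHSnonneg : 0 ≤ RHS := by
    apply div_nonneg (mul_nonneg (Real.sqrt_nonneg _) (Real.rpow_nonneg hGt.le _))
      (Real.rpow_nonneg htR.le _)
  have e1 : Real.sqrt (B / (p + 1)) * Real.sqrt (B / (p + 1)) = B / (p + 1) :=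
    Real.mul_self_sqrt (by positivity)
  have e2 : G t ^ ((p + 1) / 2) * G t ^ ((p + 1) / 2) = G t ^ (p + 1) := by
    rw [← Real.rpow_add hGt]; ring_nf
  have e3 : (t + R) ^ (q / 2) * (t + R) ^ (q / 2) = (t + R) ^ q := by
    rw [← Real.rpow_add htR]; ring_nf
  have e4 : (t + R) ^ (-q) = ((t + R) ^ q)⁻¹ := Real.rpow_neg htR.le q
  have e5 : (0:ℝ) < (t + R) ^ q := Real.rpow_pos_of_pos htR q
  have hsq : RHS * RHS = D / 2 * G t ^ (p + 1) := by
    calc RHS * RHS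
        = (Real.sqrt (B / (p + 1)) * Real.sqrt (B / (p + 1)))
            * (G t ^ ((p + 1) / 2) * G t ^ ((p + 1) / 2))
            / ((t + R) ^ (q / 2) * (t + R) ^ (q / 2)) := by rw [hRHS]; ring
      _ = (B / (p + 1)) * G t ^ (p + 1) / (t + R) ^ q := by rw [e1, e2, e3]
      _ = D / 2 * G t ^ (p + 1) := by
          rw [hD, hC, e4]; field_simp
  nlinarith [hsq, hmain, hRHSnonneg, hG't.le]
end

section
/- Let n ≥ 4, p = p₀(n) = (n+1+√(n²+10n−7))/(2(n−1)), and let R, C, ε > 0. Suppose F ∈ C²([0,T)) with F'' ≥ 0 satisfies both: (frame) F''(t) ≥ C ∫₀^{t−R} ρ^{(n−1)(1−p/2)} (t−ρ+R)^{−(n−1)p/2} ( ∫₀^{(t−ρ−R)/2} F''(s) ds )^p dρ for R ≤ t < T; and (first step) F''(t) ≥ C ε^p (t+R)^{(n−1)(1−p/2)} for 0 ≤ t < T. Set C₁ = C^{p+1} ε^{p²} / ( 2^{n−2} · 3^{(n−1)p/2} · ( n − (n−1)p/2 )^p ). Then for all t with a₁R = 2R ≤ t < T one has F''(t) ≥ C₁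 (t − 2R)^{(n−1)(1−p/2)} · log( t / (2R) ). -/
/-- The constant `C₁ = C^{p+1} ε^{p²} / (2^{n-2}·3^{(n-1)p/2}·(n-(n-1)p/2)^p)`. -/
noncomputable def Cone (n : ℕ) (p C ε : ℝ) : ℝ :=
  C ^ (p + 1) * ε ^ (p ^ 2) /
    ((2 : ℝ) ^ ((n : ℝ) - 2) * (3 : ℝ) ^ (((n : ℝ) - 1) * p / 2) *
      ((n : ℝ) - ((n : ℝ) - 1) * p / 2) ^ p)

set_option maxHeartbeats 1000000 in
/-- **Base case `j = 1` of the iteration** (Proposition 3.3 for `j = 1`).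
If `F ∈ C²([0,T))` with `F'' ≥ 0` satisfies the frame inequality and the
first-step bound `F''(t) ≥ C ε^p (t+R)^{(n-1)(1-p/2)}`, then for
`a₁R = 2R ≤ t < T` one has `F''(t) ≥ C₁ (t-2R)^{(n-1)(1-p/2)} log(t/(2R))`. -/
theorem iteration_base_case
    (n : ℕ) (hn : 4 ≤ n) (p R C ε T : ℝ)
    (hp : p = ((n : ℝ) + 1 + Real.sqrt ((n : ℝ) ^ 2 + 10 * (n : ℝ) - 7)) / (2 * ((n : ℝ) - 1)))
    (hR : 0 < R) (hC : 0 < C) (hε : 0 < ε)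
    (F F' F'' : ℝ → ℝ)
    (hF' : ∀ t ∈ Set.Ico (0 : ℝ) T, HasDerivWithinAt F (F' t) (Set.Ico 0 T) t)
    (hF'' : ∀ t ∈ Set.Ico (0 : ℝ) T, HasDerivWithinAt F' (F'' t) (Set.Ico 0 T) t)
    (hcont : ContinuousOn F'' (Set.Ico 0 T))
    (hpos : ∀ t ∈ Set.Ico (0 : ℝ) T, 0 ≤ F'' t)
    (hframe : ∀ t, R ≤ t → t < T →
      C * ∫ ρ in (0 : ℝ)..(t - R),
          ρ ^ (((n : ℝ) - 1) * (1 - p / 2)) * (t - ρ + R) ^ (-(((n : ℝ) - 1) * p / 2)) *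
            (∫ s in (0 : ℝ)..((t - ρ - R) / 2), F'' s) ^ p
        ≤ F'' t)
    (hfirst : ∀ t, 0 ≤ t → t < T →
      C * ε ^ p * (t + R) ^ (((n : ℝ) - 1) * (1 - p / 2)) ≤ F'' t) :
    ∀ t, 2 * R ≤ t → t < T →
      Cone n p C ε * (t - 2 * R) ^ (((n : ℝ) - 1) * (1 - p / 2)) *
          Real.log (t / (2 * R)) ≤ F'' t := by
  -- Basic facts about `p`
  have hn' : (4:ℝ) ≤ (n:ℝ) := by exact_mod_cast hn
  have hs0 : 0 ≤ Real.sqrt ((n : ℝ) ^ 2 + 10 * (n : ℝ) - 7) := Real.sqrt_nonneg _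
  have hs : Real.sqrt ((n : ℝ) ^ 2 + 10 * (n : ℝ) - 7) ^ 2
      = (n : ℝ) ^ 2 + 10 * (n : ℝ) - 7 := by
    rw [Real.sq_sqrt]; nlinarith
  have hden : (0:ℝ) < 2 * ((n:ℝ) - 1) := by linarith
  have hpe : p * (2 * ((n:ℝ) - 1)) = (n : ℝ) + 1 + Real.sqrt ((n : ℝ) ^ 2 + 10 * (n : ℝ) - 7) := by
    rw [hp]; field_simp; exact div_self (by linarith)
  have hquad : ((n:ℝ) - 1) * p ^ 2 = ((n:ℝ) + 1) * p + 2 := by nlinarith [hs, hpe]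
  have hp0 : 0 < p := by rw [hp]; apply div_pos; linarith; linarith
  have hp1 : 1 < p := by nlinarith [hquad, hp0]
  have hp2 : p ≤ 2 := by nlinarith [hquad, hp1]
  clear hs hs0 hpe hp hF' hF''
  set m : ℝ := ((n : ℝ) - 1) * (1 - p / 2) with hm
  set q : ℝ := ((n : ℝ) - 1) * p / 2 with hq
  have hm0 : 0 ≤ m := by rw [hm]; nlinarith
  have hm1 : 0 < m + 1 := by linarith
  have hq0 : 0 < q := by rw [hq]; nlinarith
  have hkey : (m + 1) * p = q - 1 := by
    rw [hm, hq]; linear_combination (-1/2 : ℝ) * hquad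
  have hq1 : 0 < q - 1 := by
    rw [← hkey]; positivity
  have hmq : m + q = (n:ℝ) - 1 := by rw [hm, hq]; ring
  intro t ht1 ht2
  have ht0 : 0 < t := by linarith
  rcases eq_or_lt_of_le ht1 with heq | hlt
  · -- trivial case t = 2R : the RHS is zero
    rw [← heq]
    have : (2 * R) / (2 * R) = 1 := by field_simp
    rw [this, Real.log_one, mul_zero]
    exact hpos _ ⟨by linarith, by linarith⟩
  -- main case 2R < t
  have hbtr : t - 2 * R ≤ t - R := by linarith
  have htrT : t - R < T := by linarith
  set g : ℝ → ℝ := fun ρ => ρ ^ m * (t - ρ + R) ^ (-q) *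
      (∫ s in (0 : ℝ)..((t - ρ - R) / 2), F'' s) ^ p with hg
  -- the frame inequality
  have step1 : C * ∫ ρ in (0:ℝ)..(t - R), g ρ ≤ F'' t := hframe t (by linarith) ht2
  -- nonnegativity of g on [0, t-R]
  have hg0 : ∀ ρ ∈ Set.Icc (0:ℝ) (t - R), 0 ≤ g ρ := by
    intro ρ hρ
    have h1 : (0:ℝ) ≤ ρ := hρ.1
    have h2 : (0:ℝ) ≤ t - ρ + R := by have := hρ.2; linarith
    have h3 : (0:ℝ) ≤ ∫ s in (0 : ℝ)..((t - ρ - R) / 2), F'' s := by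
      apply intervalIntegral.integral_nonneg
      · have := hρ.2; linarith
      · intro s hs
        exact hpos s ⟨hs.1, by
          have hs2 := hs.2
          have hρ2 := hρ.2
          have : s ≤ (t - R) / 2 := by linarith
          linarith⟩
    positivity
  -- continuity of g on [0, t-R]
  have hgcont : ContinuousOn g (Set.Icc 0 (t - R)) := by
    have htr0 : 0 ≤ (t - R) / 2 := by linarith
    have c1 : ContinuousOn (fun ρ : ℝ => ρ ^ m) (Set.Icc 0 (t - R)) :=
      (continuous_id.rpow_const fun x => Or.inr hm0).continuousOn
    have c2 : ContinuousOn (fun ρ : ℝ => (t - ρ + R) ^ (-q)) (Set.Icc 0 (t - R)) := by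
      apply ContinuousOn.rpow_const (by fun_prop)
      intro x hx
      exact Or.inl (ne_of_gt (by have := hx.2; linarith))
    have hFint : MeasureTheory.IntegrableOn F'' (Set.uIcc 0 ((t - R) / 2))
        MeasureTheory.volume := by
      rw [Set.uIcc_of_le htr0]
      apply ContinuousOn.integrableOn_Icc
      exact hcont.mono fun x hx => ⟨hx.1, lt_of_le_of_lt hx.2 (by linarith)⟩
    have prim : ContinuousOn (fun x => ∫ s in (0:ℝ)..x, F'' s) (Set.uIcc 0 ((t - R) / 2)) :=
      intervalIntegral.continuousOn_primitive_interval hFint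
    have c3 : ContinuousOn (fun ρ => (∫ s in (0 : ℝ)..((t - ρ - R) / 2), F'' s) ^ p)
        (Set.Icc 0 (t - R)) := by
      apply ContinuousOn.rpow_const _ (fun x _ => Or.inr hp0.le)
      apply ContinuousOn.comp prim (by fun_prop)
      intro x hx
      rw [Set.uIcc_of_le htr0]
      constructor
      · have := hx.2; linarith
      · have := hx.1; linarith
    exact (c1.mul c2).mul c3
  have hgint : IntervalIntegrable g MeasureTheory.volume 0 (t - R) := by
    apply ContinuousOn.intervalIntegrable
    rwa [Set.uIcc_of_le (by linarith : (0:ℝ) ≤ t - R)]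
  -- restrict the integral to [(t-2R)/2, t-2R]
  have step2 : ∫ ρ in ((t - 2*R)/2)..(t - 2*R), g ρ ≤ ∫ ρ in (0:ℝ)..(t - R), g ρ := by
    apply intervalIntegral.integral_mono_interval (by linarith) (by linarith) hbtr _ hgint
    filter_upwards [MeasureTheory.ae_restrict_mem measurableSet_Ioc] with ρ hρ
    exact hg0 ρ ⟨hρ.1.le, hρ.2⟩
  -- the inner integral lower bound
  have inner : ∀ ρ ∈ Set.Icc ((t - 2*R)/2) (t - 2*R),
      C * ε ^ p / (m + 1) * ((t - ρ - R) / 2) ^ (m + 1)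
        ≤ ∫ s in (0 : ℝ)..((t - ρ - R) / 2), F'' s := by
    intro ρ hρ
    obtain ⟨hρ1, hρ2⟩ := hρ
    have hσ0 : 0 < (t - ρ - R) / 2 := by linarith
    have hσT : (t - ρ - R) / 2 < T := by linarith
    have hcε : 0 < C * ε ^ p := by positivity
    calc C * ε ^ p / (m + 1) * ((t - ρ - R) / 2) ^ (m + 1)
        = ∫ s in (0:ℝ)..((t - ρ - R) / 2), C * ε ^ p * s ^ m := by
          rw [intervalIntegral.integral_const_mul,
            integral_rpow (Or.inl (by linarith : (-1:ℝ) < m)),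
            Real.zero_rpow (ne_of_gt hm1)]
          ring
      _ ≤ ∫ s in (0:ℝ)..((t - ρ - R) / 2), F'' s := by
          apply intervalIntegral.integral_mono_on hσ0.le
          · exact (Continuous.intervalIntegrable
              (continuous_const.mul (continuous_id.rpow_const fun x => Or.inr hm0)) _ _)
          · exact (hcont.mono (by
              rw [Set.uIcc_of_le hσ0.le]
              exact fun x hx => ⟨hx.1, lt_of_le_of_lt hx.2 hσT⟩)).intervalIntegrable
          · intro s hs
            calc C * ε ^ p * s ^ m ≤ C * ε ^ p * (s + R) ^ m := by
                  apply mul_le_mul_of_nonneg_left _ hcε.le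
                  exact Real.rpow_le_rpow hs.1 (by linarith) hm0
              _ ≤ F'' s := hfirst s hs.1 (lt_of_le_of_lt hs.2 hσT)
  -- the pointwise lower bound on g on [(t-2R)/2, t-2R]
  set Kc : ℝ := ((t - 2*R)/2) ^ m * 3 ^ (-q)
      * ((C * ε ^ p / (m + 1)) ^ p / 2 ^ (q - 1)) with hKc
  have hptwise : ∀ ρ ∈ Set.Icc ((t - 2*R)/2) (t - 2*R), Kc * (t - ρ - R)⁻¹ ≤ g ρ := by
    intro ρ hρ
    obtain ⟨hρ1, hρ2⟩ := hρ
    have ha0 : 0 < (t - 2*R)/2 := by linarith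
    have huR : R ≤ t - ρ - R := by linarith
    have hu0 : 0 < t - ρ - R := by linarith
    have hρ0 : 0 ≤ ρ := by linarith
    rw [hKc]
    simp only [hg]
    set I : ℝ := ∫ s in (0 : ℝ)..((t - ρ - R) / 2), F'' s with hI
    have hJ0 : 0 ≤ C * ε ^ p / (m + 1) * ((t - ρ - R) / 2) ^ (m + 1) := by
      have := Real.rpow_nonneg (by linarith : (0:ℝ) ≤ (t - ρ - R)/2) (m+1)
      positivity
    have f1 : ((t - 2*R)/2) ^ m ≤ ρ ^ m := Real.rpow_le_rpow ha0.le hρ1 hm0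
    have f2 : (3 * (t - ρ - R)) ^ (-q) ≤ (t - ρ + R) ^ (-q) := by
      apply Real.rpow_le_rpow_of_nonpos (by linarith) (by linarith) (by linarith)
    have f2' : (3:ℝ) ^ (-q) * (t - ρ - R) ^ (-q) ≤ (t - ρ + R) ^ (-q) := by
      rwa [← Real.mul_rpow (by norm_num) hu0.le]
    have f3 : (C * ε ^ p / (m + 1) * ((t - ρ - R) / 2) ^ (m + 1)) ^ p ≤ I ^ p :=
      Real.rpow_le_rpow hJ0 (inner ρ ⟨hρ1, hρ2⟩) hp0.le
    have f3' : (C * ε ^ p / (m + 1)) ^ p * ((t - ρ - R) ^ (q-1) / 2 ^ (q-1)) ≤ I ^ p := by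
      rw [← Real.div_rpow hu0.le (by norm_num : (0:ℝ) ≤ 2), ← hkey,
        Real.rpow_mul (by linarith : (0:ℝ) ≤ (t - ρ - R)/2),
        ← Real.mul_rpow (by positivity) (Real.rpow_nonneg (by linarith) _)]
      exact f3
    have n1 : (0:ℝ) ≤ ((t - 2*R)/2) ^ m := Real.rpow_nonneg ha0.le m
    have n2 : (0:ℝ) ≤ (3:ℝ) ^ (-q) * (t - ρ - R) ^ (-q) := by
      have := Real.rpow_nonneg hu0.le (-q); positivity
    have n3 : (0:ℝ) ≤ (C * ε ^ p / (m + 1)) ^ p * ((t - ρ - R) ^ (q-1) / 2 ^ (q-1)) := by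
      have h1 := Real.rpow_nonneg (by positivity : (0:ℝ) ≤ C * ε ^ p / (m+1)) p
      have h2 := Real.rpow_nonneg hu0.le (q-1)
      have h3 := Real.rpow_nonneg (by norm_num : (0:ℝ) ≤ 2) (q-1)
      positivity
    have n4 : (0:ℝ) ≤ ρ ^ m := Real.rpow_nonneg hρ0 m
    have n5 : (0:ℝ) ≤ ρ ^ m * (t - ρ + R) ^ (-q) :=
      mul_nonneg n4 (Real.rpow_nonneg (by linarith) _)
    have main : ((t - 2*R)/2) ^ m * ((3:ℝ) ^ (-q) * (t - ρ - R) ^ (-q)) *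
        ((C * ε ^ p / (m + 1)) ^ p * ((t - ρ - R) ^ (q-1) / 2 ^ (q-1)))
        ≤ ρ ^ m * (t - ρ + R) ^ (-q) * I ^ p :=
      mul_le_mul (mul_le_mul f1 f2' n2 n4) f3' n3 n5
    refine le_trans (le_of_eq ?_) main
    have huu : (t - ρ - R) ^ (-q) * (t - ρ - R) ^ (q-1) = (t - ρ - R)⁻¹ := by
      rw [← Real.rpow_add hu0, show -q + (q-1) = -1 by ring, Real.rpow_neg_one]
    linear_combination (-(((t - 2*R)/2) ^ m * (3:ℝ) ^ (-q) *
      ((C * ε ^ p / (m + 1)) ^ p / 2 ^ (q - 1)))) * huu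
  -- integrate the pointwise bound
  have step3 : ∫ ρ in ((t - 2*R)/2)..(t - 2*R), Kc * (t - ρ - R)⁻¹
      ≤ ∫ ρ in ((t - 2*R)/2)..(t - 2*R), g ρ := by
    apply intervalIntegral.integral_mono_on (by linarith) _ (hgint.mono_set ?_) hptwise
    · apply ContinuousOn.intervalIntegrable
      apply ContinuousOn.mul continuousOn_const
      apply ContinuousOn.inv₀
      · fun_prop
      · intro x hx
        rw [Set.uIcc_of_le (by linarith : (t - 2*R)/2 ≤ t - 2*R)] at hx
        have h1 : x ≤ t - 2*R := hx.2
        exact ne_of_gt (by linarith)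
    · rw [Set.uIcc_of_le (by linarith : (t - 2*R)/2 ≤ t - 2*R),
        Set.uIcc_of_le (by linarith : (0:ℝ) ≤ t - R)]
      exact Set.Icc_subset_Icc (by linarith) hbtr
  -- compute the explicit integral
  have step4 : ∫ ρ in ((t - 2*R)/2)..(t - 2*R), Kc * (t - ρ - R)⁻¹
      = Kc * Real.log (t / (2 * R)) := by
    rw [intervalIntegral.integral_const_mul]
    congr 1
    have h1 : (fun ρ : ℝ => (t - ρ - R)⁻¹) = fun ρ => ((t - R) - ρ)⁻¹ := by
      funext ρ; ring_nf
    rw [h1, intervalIntegral.integral_comp_sub_left (fun x : ℝ => x⁻¹) (t - R)]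
    have h2 : t - R - (t - 2*R) = R := by ring
    have h3 : t - R - (t - 2*R)/2 = t / 2 := by ring
    rw [h2, h3, integral_inv]
    · rw [div_div]
    · rw [Set.uIcc_of_le (by linarith)]
      intro h
      exact absurd h.1 (by norm_num; linarith)
  -- the constant identity
  have hconst : C * Kc = Cone n p C ε * (t - 2*R) ^ m := by
    have hb0 : (0:ℝ) < t - 2*R := by linarith
    rw [hKc, Cone, ← hq, show (n : ℝ) - q = m + 1 by rw [hm, hq]; ring]
    rw [show (t - 2*R)/2 = (t - 2*R)/2 from rfl,
      Real.div_rpow hb0.le (by norm_num : (0:ℝ) ≤ 2)]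
    rw [Real.div_rpow (by positivity : (0:ℝ) ≤ C * ε ^ p) hm1.le]
    rw [Real.mul_rpow hC.le (by positivity : (0:ℝ) ≤ ε ^ p)]
    rw [show (p^2 : ℝ) = p * p from sq p, Real.rpow_mul hε.le]
    rw [show C ^ (p + 1) = C ^ p * C by rw [Real.rpow_add hC, Real.rpow_one]]
    rw [Real.rpow_neg (by norm_num : (0:ℝ) ≤ 3)]
    rw [show (n:ℝ) - 2 = m + (q - 1) by linarith, Real.rpow_add two_pos]
    have n1 : (2:ℝ) ^ m ≠ 0 := (Real.rpow_pos_of_pos two_pos m).ne'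
    have n2 : (2:ℝ) ^ (q-1) ≠ 0 := (Real.rpow_pos_of_pos two_pos _).ne'
    have n3 : (3:ℝ) ^ q ≠ 0 := (Real.rpow_pos_of_pos (by norm_num) _).ne'
    have n4 : (m+1) ^ p ≠ 0 := (Real.rpow_pos_of_pos hm1 _).ne'
    field_simp
  have hlog : 0 ≤ Real.log (t / (2 * R)) := by
    apply Real.log_nonneg
    rw [le_div_iff₀ (by linarith)]; linarith
  calc Cone n p C ε * (t - 2*R) ^ m * Real.log (t / (2 * R))
      = C * (Kc * Real.log (t / (2 * R))) := by rw [← hconst]; ring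
    _ = C * ∫ ρ in ((t - 2*R)/2)..(t - 2*R), Kc * (t - ρ - R)⁻¹ := by rw [step4]
    _ ≤ C * ∫ ρ in ((t - 2*R)/2)..(t - 2*R), g ρ := by
        apply mul_le_mul_of_nonneg_left step3 hC.le
    _ ≤ C * ∫ ρ in (0:ℝ)..(t - R), g ρ := by
        apply mul_le_mul_of_nonneg_left step2 hC.le
    _ ≤ F'' t := step1
end
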